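/- Let X, Y be independent Weibull random variables with common β, γ > 0 and scales α_S, α_A > 0 chosen so that E[X] = RS and E[Y] = RA (so α_S = (RS − β)/Γ(1+1/γ), α_A = (RA − β)/Γ(1+1/γ)). Then P(X > Y) = (RS − β)^γ / ((RS − β)^γ + (RA − β)^γ). -/

import Mathlib

open MeasureTheory ProbabilityTheory Real

noncomputable def weibullPDF (α β γ x : ℝ) : ℝ :=
  if β ≤ x then (γ / α) * ((x - β) / α) ^ (γ - 1) * Real.exp (-((x - β) / α) ^ γ) else 0

section Aux

open Set Filter

lemma weib_cont_exp (β γ k : ℝ) (hγ : 0 < γ) :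
    Continuous (fun y : ℝ => Real.exp (-(k * (y - β) ^ γ))) := by
  have h : Continuous (fun y : ℝ => (y - β) ^ γ) := by
    rw [continuous_iff_continuousAt]
    intro y
    exact (Real.continuousAt_rpow_const _ _ (Or.inr hγ.le)).comp
      ((continuous_id.sub continuous_const).continuousAt)
  exact Real.continuous_exp.comp ((continuous_const.mul h).neg)

lemma weib_cont (β γ k : ℝ) (hγ : 0 < γ) :
    Continuous (fun y : ℝ => -(1/k) * Real.exp (-(k * (y - β) ^ γ))) :=
  continuous_const.mul (weib_cont_exp β γ k hγ)

lemma weib_hasDerivAt (β γ k : ℝ) (hγ : 0 < γ) (hk : k ≠ 0) {x : ℝ} (hx : β < x) :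
    HasDerivAt (fun y : ℝ => -(1/k) * Real.exp (-(k * (y - β) ^ γ)))
      (γ * (x - β) ^ (γ - 1) * Real.exp (-(k * (x - β) ^ γ))) x := by
  have h1 : HasDerivAt (fun y : ℝ => y - β) 1 x := (hasDerivAt_id x).sub_const β
  have h2 : HasDerivAt (fun y : ℝ => (y - β) ^ γ) (γ * (x - β) ^ (γ - 1) * 1) x :=
    (Real.hasDerivAt_rpow_const (p := γ) (Or.inl (sub_pos.mpr hx).ne')).comp x h1 (h₂ := fun y : ℝ => y ^ γ)
  have h3 : HasDerivAt (fun y : ℝ => -(k * (y - β) ^ γ))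
      (-(k * (γ * (x - β) ^ (γ - 1) * 1))) x := (h2.const_mul k).neg
  have h4 := (h3.exp).const_mul (-(1/k))
  refine h4.congr_deriv ?_
  field_simp

lemma weib_integral_Ioi (β γ k : ℝ) (hγ : 0 < γ) (hk : 0 < k) :
    IntegrableOn (fun x => γ * (x - β) ^ (γ - 1) * Real.exp (-(k * (x - β) ^ γ))) (Ioi β) volume ∧
    ∫ x in Ioi β, γ * (x - β) ^ (γ - 1) * Real.exp (-(k * (x - β) ^ γ)) = 1 / k := by
  have hcont := (weib_cont β γ k hγ).continuousWithinAt (x := β) (s := Ici β)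
  have hderiv : ∀ x ∈ Ioi β, HasDerivAt (fun y : ℝ => -(1/k) * Real.exp (-(k * (y - β) ^ γ)))
      (γ * (x - β) ^ (γ - 1) * Real.exp (-(k * (x - β) ^ γ))) x :=
    fun x hx => weib_hasDerivAt β γ k hγ hk.ne' hx
  have hpos : ∀ x ∈ Ioi β, 0 ≤ γ * (x - β) ^ (γ - 1) * Real.exp (-(k * (x - β) ^ γ)) := by
    intro x hx
    have : (0:ℝ) ≤ (x - β) ^ (γ - 1) := Real.rpow_nonneg (by simp at hx; linarith) _
    positivity
  have htend : Tendsto (fun y : ℝ => -(1/k) * Real.exp (-(k * (y - β) ^ γ))) atTop (nhds 0) := by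
    have h1 : Tendsto (fun y : ℝ => (y - β) ^ γ) atTop atTop :=
      (tendsto_rpow_atTop hγ).comp (tendsto_atTop_add_const_right _ (-β) tendsto_id)
    have h2 : Tendsto (fun y : ℝ => -(k * (y - β) ^ γ)) atTop atBot :=
      tendsto_neg_atTop_atBot.comp (h1.const_mul_atTop hk)
    have h3 := Real.tendsto_exp_atBot.comp h2
    have h4 := h3.const_mul (-(1/k))
    simpa using h4
  constructor
  · exact integrableOn_Ioi_deriv_of_nonneg hcont hderiv hpos htend
  · rw [integral_Ioi_of_hasDerivAt_of_nonneg hcont hderiv hpos htend]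
    simp [Real.zero_rpow hγ.ne']

lemma weib_intervalIntegrable (β γ k x : ℝ) (hγ : 0 < γ) :
    IntervalIntegrable (fun y => γ * (y - β) ^ (γ - 1) * Real.exp (-(k * (y - β) ^ γ)))
      volume β x := by
  have h1 : IntervalIntegrable (fun t : ℝ => t ^ (γ - 1)) volume 0 (x - β) :=
    intervalIntegral.intervalIntegrable_rpow' (by linarith)
  have h2 := h1.comp_sub_right β
  rw [zero_add, sub_add_cancel] at h2
  have h3 : ContinuousOn (fun y : ℝ => γ * Real.exp (-(k * (y - β) ^ γ))) (Set.uIcc β x) :=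
    (continuous_const.mul (weib_cont_exp β γ k hγ)).continuousOn
  have h4 := h2.mul_continuousOn h3
  apply h4.congr
  intro y _
  simp only
  ring

lemma weib_integral_Ioo (β γ k x : ℝ) (hγ : 0 < γ) (hk : 0 < k) (hx : β ≤ x) :
    IntegrableOn (fun y => γ * (y - β) ^ (γ - 1) * Real.exp (-(k * (y - β) ^ γ))) (Ioo β x) volume ∧
    ∫ y in Ioo β x, γ * (y - β) ^ (γ - 1) * Real.exp (-(k * (y - β) ^ γ)) =
      (1 - Real.exp (-(k * (x - β) ^ γ))) / k := by
  have hint := weib_intervalIntegrable β γ k x hγ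
  constructor
  · exact ((intervalIntegrable_iff_integrableOn_Icc_of_le hx).1 hint).mono_set Ioo_subset_Icc_self
  · have hcont : ContinuousOn (fun y : ℝ => -(1/k) * Real.exp (-(k * (y - β) ^ γ))) (Icc β x) :=
      (weib_cont β γ k hγ).continuousOn
    have hderiv : ∀ y ∈ Ioo β x,
        HasDerivWithinAt (fun y : ℝ => -(1/k) * Real.exp (-(k * (y - β) ^ γ)))
          (γ * (y - β) ^ (γ - 1) * Real.exp (-(k * (y - β) ^ γ))) (Ioi y) y :=
      fun y hy => (weib_hasDerivAt β γ k hγ hk.ne' hy.1).hasDerivWithinAt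
    have := intervalIntegral.integral_eq_sub_of_hasDeriv_right_of_le hx hcont hderiv hint
    rw [intervalIntegral.integral_of_le hx, integral_Ioc_eq_integral_Ioo] at this
    rw [this]
    simp [Real.zero_rpow hγ.ne']
    ring

lemma weibullPDF_eq (α β γ : ℝ) (hα : 0 < α) {y : ℝ} (hy : β < y) :
    weibullPDF α β γ y =
      α ^ (-γ) * (γ * (y - β) ^ (γ - 1) * Real.exp (-(α ^ (-γ) * (y - β) ^ γ))) := by
  have h0 : (0:ℝ) ≤ y - β := by linarith
  have hαγ : α * α ^ (γ - 1) = α ^ γ := by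
    nth_rewrite 1 [← Real.rpow_one α]
    rw [← Real.rpow_add hα]
    ring_nf
  rw [weibullPDF, if_pos hy.le, Real.div_rpow h0 hα.le, Real.div_rpow h0 hα.le,
    Real.rpow_neg hα.le]
  have harg : (y - β) ^ γ / α ^ γ = (α ^ γ)⁻¹ * (y - β) ^ γ := by ring
  rw [harg, ← hαγ]
  field_simp

lemma weibullPDF_measurable (α β γ : ℝ) : Measurable (weibullPDF α β γ) := by
  unfold weibullPDF
  apply Measurable.ite (measurableSet_le measurable_const measurable_id)
  · fun_prop
  · exact measurable_const

lemma weibullPDF_nonneg (α β γ : ℝ) (hγ : 0 < γ) (hα : 0 < α) (x : ℝ) : 0 ≤ weibullPDF α β γ x := by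
  unfold weibullPDF
  split_ifs with h
  · have h1 : (0:ℝ) ≤ (x - β) / α := div_nonneg (by linarith) hα.le
    have h2 : (0:ℝ) ≤ ((x - β) / α) ^ (γ - 1) := Real.rpow_nonneg h1 _
    positivity
  · exact le_refl _

lemma weib_measure_Iio (α β γ : ℝ) (hγ : 0 < γ) (hα : 0 < α) (x : ℝ) :
    volume.withDensity (fun y => ENNReal.ofReal (weibullPDF α β γ y)) (Iio x) =
      ENNReal.ofReal (if β ≤ x then 1 - Real.exp (-(α ^ (-γ) * (x - β) ^ γ)) else 0) := by
  set k := α ^ (-γ) with hkdef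
  have hk : 0 < k := Real.rpow_pos_of_pos hα _
  rw [withDensity_apply _ measurableSet_Iio]
  rcases le_or_gt x β with hxb | hbx
  · have hz : ∀ y ∈ Iio x, ENNReal.ofReal (weibullPDF α β γ y) = 0 := by
      intro y hy
      have hyx : y < x := hy
      have : ¬ β ≤ y := by linarith
      simp [weibullPDF, this]
    rw [setLIntegral_congr_fun measurableSet_Iio hz]
    have hr : (if β ≤ x then 1 - Real.exp (-(k * (x - β) ^ γ)) else 0) = 0 := by
      split_ifs with h
      · have hxβ : x = β := le_antisymm hxb h
        simp [hxβ, Real.zero_rpow hγ.ne']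
      · rfl
    rw [hr]
    simp
  · set F : ℝ → ENNReal := fun y => ENNReal.ofReal (weibullPDF α β γ y) with hF
    have hind : (Iio x).indicator F =ᵐ[volume] (Ioo β x).indicator F := by
      refine ae_iff.mpr (measure_mono_null ?_ (measure_singleton β))
      intro y hy
      simp only [Set.mem_setOf_eq] at hy
      by_contra hyβ
      apply hy
      simp only [Set.mem_singleton_iff] at hyβ
      simp only [Set.indicator_apply, Set.mem_Iio, Set.mem_Ioo]
      rcases lt_trichotomy y β with h1 | h1 | h1
      · have hF0 : F y = 0 := by simp [hF, weibullPDF, not_le.mpr h1]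
        have hn : ¬(β < y ∧ y < x) := fun h => absurd h.1 (by linarith)
        rw [if_neg hn]
        split_ifs with h2
        · exact hF0
        · rfl
      · exact absurd h1 hyβ
      · by_cases h2 : y < x
        · rw [if_pos h2, if_pos ⟨h1, h2⟩]
        · rw [if_neg h2, if_neg (fun h => h2 h.2)]
    rw [← lintegral_indicator measurableSet_Iio, lintegral_congr_ae hind,
      lintegral_indicator measurableSet_Ioo]
    have heq : ∀ y ∈ Ioo β x, F y =
        ENNReal.ofReal (k * (γ * (y - β) ^ (γ - 1) * Real.exp (-(k * (y - β) ^ γ)))) := by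
      intro y hy
      simp only [hF]
      rw [weibullPDF_eq α β γ hα hy.1]
    rw [setLIntegral_congr_fun measurableSet_Ioo heq]
    obtain ⟨hIntg, hvalg⟩ := weib_integral_Ioo β γ k x hγ hk hbx.le
    have hInt : IntegrableOn
        (fun y => k * (γ * (y - β) ^ (γ - 1) * Real.exp (-(k * (y - β) ^ γ)))) (Ioo β x) volume :=
      hIntg.const_mul k
    have hnn : 0 ≤ᵐ[volume.restrict (Ioo β x)]
        (fun y => k * (γ * (y - β) ^ (γ - 1) * Real.exp (-(k * (y - β) ^ γ)))) := by
      filter_upwards [ae_restrict_mem measurableSet_Ioo] with y hy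
      have : (0:ℝ) ≤ (y - β) ^ (γ - 1) := Real.rpow_nonneg (by linarith [hy.1]) _
      positivity
    rw [← ofReal_integral_eq_lintegral_ofReal hInt hnn, integral_const_mul, hvalg,
      if_pos hbx.le]
    congr 1
    field_simp

end Aux

theorem pythagorean_formula
    {Ω : Type*} [MeasureSpace Ω] [IsProbabilityMeasure (ℙ : Measure Ω)]
    (RS RA β γ : ℝ) (hRS : β < RS) (hRA : β < RA) (hγ : 0 < γ)
    (αS αA : ℝ)
    (hαS : αS = (RS - β) / Real.Gamma (1 + 1 / γ))
    (hαA : αA = (RA - β) / Real.Gamma (1 + 1 / γ))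
    (X Y : Ω → ℝ) (hX : Measurable X) (hY : Measurable Y)
    (hXd : Measure.map X ℙ =
      volume.withDensity (fun x => ENNReal.ofReal (weibullPDF αS β γ x)))
    (hYd : Measure.map Y ℙ =
      volume.withDensity (fun y => ENNReal.ofReal (weibullPDF αA β γ y)))
    (hind : IndepFun X Y ℙ) :
    ℙ {ω | X ω > Y ω} =
      ENNReal.ofReal ((RS - β) ^ γ / ((RS - β) ^ γ + (RA - β) ^ γ)) := by
  have hΓ : 0 < Real.Gamma (1 + 1 / γ) := Real.Gamma_pos_of_pos (by positivity)
  have hRSβ : (0:ℝ) < RS - β := by linarith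
  have hRAβ : (0:ℝ) < RA - β := by linarith
  have hαS' : 0 < αS := by rw [hαS]; positivity
  have hαA' : 0 < αA := by rw [hαA]; positivity
  set kS := αS ^ (-γ) with hkS
  set kA := αA ^ (-γ) with hkA
  have hkS' : 0 < kS := Real.rpow_pos_of_pos hαS' _
  have hkA' : 0 < kA := Real.rpow_pos_of_pos hαA' _
  have hmap := (indepFun_iff_map_prod_eq_prod_map_map hX.aemeasurable hY.aemeasurable).mp hind
  have hms : MeasurableSet {p : ℝ × ℝ | p.2 < p.1} :=
    measurableSet_lt measurable_snd measurable_fst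
  have hsets : {ω | X ω > Y ω} = (fun ω => (X ω, Y ω)) ⁻¹' {p : ℝ × ℝ | p.2 < p.1} := rfl
  rw [hsets, ← Measure.map_apply (hX.prodMk hY) hms, hmap, hXd, hYd,
    Measure.prod_apply hms]
  set FA : ℝ → ℝ := fun x => if β ≤ x then 1 - Real.exp (-(kA * (x - β) ^ γ)) else 0 with hFA
  have h1 : ∀ x : ℝ,
      (volume.withDensity fun y => ENNReal.ofReal (weibullPDF αA β γ y))
        (Prod.mk x ⁻¹' {p : ℝ × ℝ | p.2 < p.1}) = ENNReal.ofReal (FA x) := by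
    intro x
    have : (Prod.mk x ⁻¹' {p : ℝ × ℝ | p.2 < p.1}) = Set.Iio x := rfl
    rw [this]
    exact weib_measure_Iio αA β γ hγ hαA' x
  rw [lintegral_congr h1]
  have hmFA : Measurable fun x => ENNReal.ofReal (FA x) := by
    apply Measurable.ennreal_ofReal
    simp only [hFA]
    apply Measurable.ite (measurableSet_le measurable_const measurable_id) ?_ measurable_const
    fun_prop
  have hmS : Measurable fun x => ENNReal.ofReal (weibullPDF αS β γ x) :=
    (weibullPDF_measurable αS β γ).ennreal_ofReal
  rw [lintegral_withDensity_eq_lintegral_mul _ hmS hmFA]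
  have hFAnn : ∀ x : ℝ, 0 ≤ FA x := by
    intro x
    simp only [hFA]
    split_ifs with h
    · have hu : (0:ℝ) ≤ (x - β) ^ γ := Real.rpow_nonneg (by linarith) _
      have : Real.exp (-(kA * (x - β) ^ γ)) ≤ 1 := by
        apply Real.exp_le_one_iff.mpr; nlinarith
      linarith
    · exact le_refl _
  have h2 : ∀ x : ℝ,
      ((fun x => ENNReal.ofReal (weibullPDF αS β γ x)) * fun x => ENNReal.ofReal (FA x)) x =
        ENNReal.ofReal (weibullPDF αS β γ x * FA x) := by
    intro x
    simp only [Pi.mul_apply]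
    rw [ENNReal.ofReal_mul (weibullPDF_nonneg αS β γ hγ hαS' x)]
  rw [lintegral_congr h2]
  set H : ℝ → ℝ := fun x => weibullPDF αS β γ x * FA x with hH
  have hind2 : (fun x => ENNReal.ofReal (H x)) =ᵐ[volume]
      (Set.Ioi β).indicator (fun x => ENNReal.ofReal (H x)) := by
    refine ae_iff.mpr (measure_mono_null ?_ (measure_singleton β))
    intro x hx
    simp only [Set.mem_setOf_eq] at hx
    by_contra hxβ
    apply hx
    simp only [Set.mem_singleton_iff] at hxβ
    rcases lt_trichotomy x β with h1' | h1' | h1'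
    · have hz : H x = 0 := by simp [hH, weibullPDF, not_le.mpr h1']
      rw [Set.indicator_of_notMem (by simpa using h1'.le.not_gt : x ∉ Set.Ioi β)]
      simp [hz]
    · exact absurd h1' hxβ
    · rw [Set.indicator_of_mem (Set.mem_Ioi.mpr h1')]
  rw [lintegral_congr_ae hind2, lintegral_indicator measurableSet_Ioi]
  set φ : ℝ → ℝ := fun x => kS * ((γ * (x - β) ^ (γ - 1) * Real.exp (-(kS * (x - β) ^ γ))) -
      (γ * (x - β) ^ (γ - 1) * Real.exp (-((kS + kA) * (x - β) ^ γ)))) with hφ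
  have h3 : ∀ x ∈ Set.Ioi β, ENNReal.ofReal (H x) = ENNReal.ofReal (φ x) := by
    intro x hx
    have hx' : β < x := hx
    congr 1
    have hexp : Real.exp (-(kS * (x - β) ^ γ)) * Real.exp (-(kA * (x - β) ^ γ)) =
        Real.exp (-((kS + kA) * (x - β) ^ γ)) := by
      rw [← Real.exp_add]; ring_nf
    simp only [hH, hFA, hφ]
    rw [weibullPDF_eq αS β γ hαS' hx', if_pos hx'.le, ← hkS]
    linear_combination (-(kS * γ * (x - β) ^ (γ - 1))) * hexp
  rw [setLIntegral_congr_fun measurableSet_Ioi h3]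
  obtain ⟨hIS, hVS⟩ := weib_integral_Ioi β γ kS hγ hkS'
  obtain ⟨hISA, hVSA⟩ := weib_integral_Ioi β γ (kS + kA) hγ (by positivity)
  have hIφ : IntegrableOn φ (Set.Ioi β) volume := (hIS.sub hISA).const_mul kS
  have hnn2 : 0 ≤ᵐ[volume.restrict (Set.Ioi β)] φ := by
    filter_upwards [ae_restrict_mem measurableSet_Ioi] with x hx
    have hxb : β < x := hx
    have ht : (0:ℝ) ≤ (x - β) ^ (γ - 1) := Real.rpow_nonneg (by linarith) _
    have hu : (0:ℝ) ≤ (x - β) ^ γ := Real.rpow_nonneg (by linarith) _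
    have hee : Real.exp (-((kS + kA) * (x - β) ^ γ)) ≤ Real.exp (-(kS * (x - β) ^ γ)) := by
      apply Real.exp_le_exp.mpr; nlinarith
    have hd : 0 ≤ (γ * (x - β) ^ (γ - 1) * Real.exp (-(kS * (x - β) ^ γ))) -
        (γ * (x - β) ^ (γ - 1) * Real.exp (-((kS + kA) * (x - β) ^ γ))) := by
      nlinarith [mul_nonneg (mul_nonneg hγ.le ht) (sub_nonneg.mpr hee)]
    exact mul_nonneg hkS'.le hd
  rw [← ofReal_integral_eq_lintegral_ofReal hIφ hnn2]
  have hval : ∫ x in Set.Ioi β, φ x = kS * (1 / kS - 1 / (kS + kA)) := by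
    simp only [hφ]
    rw [integral_const_mul, integral_sub hIS hISA, hVS, hVSA]
  rw [hval]
  congr 1
  have hkSval : kS = Real.Gamma (1 + 1 / γ) ^ γ / (RS - β) ^ γ := by
    rw [hkS, hαS, Real.div_rpow hRSβ.le hΓ.le, Real.rpow_neg hRSβ.le, Real.rpow_neg hΓ.le]
    field_simp
  have hkAval : kA = Real.Gamma (1 + 1 / γ) ^ γ / (RA - β) ^ γ := by
    rw [hkA, hαA, Real.div_rpow hRAβ.le hΓ.le, Real.rpow_neg hRAβ.le, Real.rpow_neg hΓ.le]
    field_simp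
  have ha : (0:ℝ) < (RS - β) ^ γ := Real.rpow_pos_of_pos hRSβ _
  have hb : (0:ℝ) < (RA - β) ^ γ := Real.rpow_pos_of_pos hRAβ _
  have hG : (0:ℝ) < Real.Gamma (1 + 1 / γ) ^ γ := Real.rpow_pos_of_pos hΓ _
  rw [hkSval, hkAval]
  field_simp
  ring
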